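/- Let R₁ = (M₁, α₁) and R₂ = (M₂, α₂) be complete deterministic Rabin acceptors over the same finite alphabet with finite state sets. Then ⟦R₁⟧ ⊆ ⟦R₂⟧ if and only if for every reachable SCC C of the product automaton M₁ × M₂, if π₁(C) satisfies α₁ then π₂(C) satisfies α₂. Moreover, if ⟦R₁⟧ is not a subset of ⟦R₂⟧, then there exist u ∈ Σ* and v ∈ Σ⁺ such that the ultimately periodic ω-word u(v)^ω is in ⟦R₁⟧ \ ⟦R₂⟧. -/

import Mathlib

open Filter

/-- Extended transition function: `dstar δ q x` is the state reached from `q` reading `x`. -/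
def dstar {Q A : Type*} (δ : Q → A → Q) (q : Q) (x : List A) : Q := x.foldl δ q

/-- The run of a deterministic automaton on an ω-word from state `q`. -/
def run {Q A : Type*} (δ : Q → A → Q) (q : Q) (w : ℕ → A) : ℕ → Q
  | 0 => q
  | n + 1 => δ (run δ q w n) (w n)

/-- The set of states visited infinitely often by the run on `w` from `q`. -/
def infOcc {Q A : Type*} (δ : Q → A → Q) (q : Q) (w : ℕ → A) : Set Q :=
  {p | ∃ᶠ n in atTop, run δ q w n = p}

/-- `C` is a strongly connected component of the automaton with transitions `δ`. -/
def IsSCC {Q A : Type*} (δ : Q → A → Q) (C : Set Q) : Prop :=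
  C.Nonempty ∧ ∀ q₁ ∈ C, ∀ q₂ ∈ C, ∃ x : List A, x ≠ [] ∧ dstar δ q₁ x = q₂ ∧
    ∀ x', x' <+: x → dstar δ q₁ x' ∈ C

/-- `q` is reachable from the initial state `qι`. -/
def Reachable {Q A : Type*} (δ : Q → A → Q) (qι q : Q) : Prop :=
  ∃ x : List A, dstar δ qι x = q

/-- The ultimately periodic ω-word `u(v)^ω`. -/
def upWord {A : Type*} (u v : List A) (hv : v ≠ []) : ℕ → A := fun n =>
  if h : n < u.length then u[n]
  else v[(n - u.length) % v.length]'(Nat.mod_lt _ (List.length_pos_iff.mpr hv))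

/-- The transition function of the product automaton. -/
def prodStep {Q₁ Q₂ A : Type*} (δ₁ : Q₁ → A → Q₁) (δ₂ : Q₂ → A → Q₂) :
    Q₁ × Q₂ → A → Q₁ × Q₂ := fun p a => (δ₁ p.1 a, δ₂ p.2 a)

/-- The ω-word `x·z` obtained by prepending the finite word `x` to `z`. -/
def prepend {A : Type*} (x : List A) (z : ℕ → A) : ℕ → A := fun n =>
  if h : n < x.length then x[n] else z (n - x.length)

/-- A set `S` of states satisfies a Rabin condition `α`. -/
def rabinSat {Q : Type*} (α : Set (Set Q × Set Q)) (S : Set Q) : Prop :=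
  ∃ p ∈ α, (S ∩ p.1).Nonempty ∧ S ∩ p.2 = ∅

section Aux

variable {Q A Q₁ Q₂ : Type*}

lemma mem_infOcc {δ : Q → A → Q} {q p : Q} {w : ℕ → A} :
    p ∈ infOcc δ q w ↔ ∃ᶠ n in atTop, run δ q w n = p := Iff.rfl

lemma dstar_append (δ : Q → A → Q) (q : Q) (x y : List A) :
    dstar δ q (x ++ y) = dstar δ (dstar δ q x) y := List.foldl_append ..

lemma run_eq_dstar (δ : Q → A → Q) (q : Q) (w : ℕ → A) :
    ∀ n, run δ q w n = dstar δ q (List.ofFn fun i : Fin n => w i)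
  | 0 => rfl
  | n + 1 => by
    rw [run, run_eq_dstar δ q w n, List.ofFn_succ']
    simp [dstar, List.concat_eq_append, List.foldl_concat]

lemma run_add (δ : Q → A → Q) (q : Q) (w : ℕ → A) (n : ℕ) :
    ∀ k, run δ q w (n + k) = run δ (run δ q w n) (fun i => w (n + i)) k
  | 0 => rfl
  | k + 1 => by rw [← Nat.add_assoc, run, run, run_add δ q w n k]

lemma eventually_mem_infOcc [Finite Q] (δ : Q → A → Q) (q : Q) (w : ℕ → A) :
    ∀ᶠ n in atTop, run δ q w n ∈ infOcc δ q w := by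
  have h : ∀ p : Q, ∀ᶠ n in atTop, p ∉ infOcc δ q w → run δ q w n ≠ p := by
    intro p
    by_cases hp : p ∈ infOcc δ q w
    · exact Eventually.of_forall fun n h => absurd hp h
    · exact (not_frequently.mp hp).mono fun n h _ => h
  refine (eventually_all.mpr h).mono fun n hn => ?_
  by_contra hmem
  exact hn _ hmem rfl

lemma reachable_of_mem_infOcc {δ : Q → A → Q} {q p : Q} {w : ℕ → A}
    (hp : p ∈ infOcc δ q w) : Reachable δ q p := by
  obtain ⟨n, hn⟩ := hp.exists
  exact ⟨List.ofFn fun i : Fin n => w i, by rw [← run_eq_dstar]; exact hn⟩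

lemma infOcc_isSCC [Finite Q] (δ : Q → A → Q) (q : Q) (w : ℕ → A) :
    IsSCC δ (infOcc δ q w) := by
  obtain ⟨N, hN⟩ := eventually_atTop.mp (eventually_mem_infOcc δ q w)
  refine ⟨⟨run δ q w N, hN N le_rfl⟩, ?_⟩
  intro p₁ h₁ p₂ h₂
  obtain ⟨n, hnN, hn⟩ := frequently_atTop.mp h₁ N
  obtain ⟨m, hm1, hm⟩ := frequently_atTop.mp h₂ (n + 1)
  have hseg : ∀ k, dstar δ p₁ (List.ofFn fun i : Fin k => w (n + i)) = run δ q w (n + k) := by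
    intro k
    rw [run_add, run_eq_dstar δ (run δ q w n) (fun i => w (n + i)) k, hn]
  refine ⟨List.ofFn fun i : Fin (m - n) => w (n + i), ?_, ?_, ?_⟩
  · have : 0 < m - n := by omega
    simp only [ne_eq, List.ofFn_eq_nil_iff]
    omega
  · rw [hseg, show n + (m - n) = m by omega, hm]
  · intro x' hx'
    have hlen : x'.length ≤ m - n := by simpa using hx'.length_le
    have hx'eq : x' = List.ofFn fun i : Fin x'.length => w (n + i) := by
      refine List.ext_getElem (by simp) fun i h1 h2 => ?_
      rw [hx'.getElem h1]
      simp
    rw [hx'eq, hseg]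
    exact hN _ (by omega)

lemma run_prod (δ₁ : Q₁ → A → Q₁) (δ₂ : Q₂ → A → Q₂) (a : Q₁) (b : Q₂) (w : ℕ → A) :
    ∀ n, run (prodStep δ₁ δ₂) (a, b) w n = (run δ₁ a w n, run δ₂ b w n)
  | 0 => rfl
  | n + 1 => by rw [run, run_prod δ₁ δ₂ a b w n]; rfl

lemma fst_image_infOcc [Finite Q₂] (δ₁ : Q₁ → A → Q₁) (δ₂ : Q₂ → A → Q₂)
    (a : Q₁) (b : Q₂) (w : ℕ → A) :
    Prod.fst '' infOcc (prodStep δ₁ δ₂) (a, b) w = infOcc δ₁ a w := by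
  ext p₁
  constructor
  · rintro ⟨⟨p, p₂⟩, hp, rfl⟩
    exact hp.mono fun n hn => by
      have := congrArg Prod.fst hn; rwa [run_prod] at this
  · intro h
    have hS : {n | run δ₁ a w n = p₁}.Infinite := Nat.frequently_atTop_iff_infinite.mp h
    haveI := hS.to_subtype
    obtain ⟨p₂, hp₂⟩ := Finite.exists_infinite_fiber
      (fun n : {n | run δ₁ a w n = p₁} => run δ₂ b w n)
    have hT : {n | run (prodStep δ₁ δ₂) (a, b) w n = (p₁, p₂)}.Infinite := by
      refine Set.Infinite.mono ?_
        ((Set.infinite_coe_iff.mp hp₂).image Subtype.val_injective.injOn)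
      rintro n ⟨⟨n', hn'⟩, hfib, rfl⟩
      simp only [Set.mem_preimage, Set.mem_singleton_iff] at hfib
      simp only [Set.mem_setOf_eq, run_prod]
      exact Prod.ext hn' hfib
    exact ⟨(p₁, p₂), Nat.frequently_atTop_iff_infinite.mpr hT, rfl⟩

lemma snd_image_infOcc [Finite Q₁] (δ₁ : Q₁ → A → Q₁) (δ₂ : Q₂ → A → Q₂)
    (a : Q₁) (b : Q₂) (w : ℕ → A) :
    Prod.snd '' infOcc (prodStep δ₁ δ₂) (a, b) w = infOcc δ₂ b w := by
  ext p₂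
  constructor
  · rintro ⟨⟨p₁, p⟩, hp, rfl⟩
    exact hp.mono fun n hn => by
      have := congrArg Prod.snd hn; rwa [run_prod] at this
  · intro h
    have hS : {n | run δ₂ b w n = p₂}.Infinite := Nat.frequently_atTop_iff_infinite.mp h
    haveI := hS.to_subtype
    obtain ⟨p₁, hp₁⟩ := Finite.exists_infinite_fiber
      (fun n : {n | run δ₂ b w n = p₂} => run δ₁ a w n)
    have hT : {n | run (prodStep δ₁ δ₂) (a, b) w n = (p₁, p₂)}.Infinite := by
      refine Set.Infinite.mono ?_
        ((Set.infinite_coe_iff.mp hp₁).image Subtype.val_injective.injOn)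
      rintro n ⟨⟨n', hn'⟩, hfib, rfl⟩
      simp only [Set.mem_preimage, Set.mem_singleton_iff] at hfib
      simp only [Set.mem_setOf_eq, run_prod]
      exact Prod.ext hfib hn'
    exact ⟨(p₁, p₂), Nat.frequently_atTop_iff_infinite.mpr hT, rfl⟩

lemma loop_word {δ : Q → A → Q} {C : Set Q} (hC : IsSCC δ C) {p₀ : Q} (hp₀ : p₀ ∈ C) :
    ∀ l : List Q, (∀ c ∈ l, c ∈ C) → ∀ a ∈ C,
      ∃ x : List A, x ≠ [] ∧ dstar δ a x = p₀ ∧ (∀ x', x' <+: x → dstar δ a x' ∈ C) ∧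
        ∀ c ∈ l, ∃ x', x' <+: x ∧ dstar δ a x' = c := by
  intro l
  induction l with
  | nil =>
    intro _ a ha
    obtain ⟨x, hne, hx, hpre⟩ := hC.2 a ha p₀ hp₀
    exact ⟨x, hne, hx, hpre, by simp⟩
  | cons c l ih =>
    intro hl a ha
    have hc : c ∈ C := hl c List.mem_cons_self
    obtain ⟨x₁, hne₁, hx₁, hpre₁⟩ := hC.2 a ha c hc
    obtain ⟨x₂, hne₂, hx₂, hpre₂, hvis⟩ := ih (fun d hd => hl d (List.mem_cons_of_mem c hd)) c hc
    refine ⟨x₁ ++ x₂, by simp [hne₁], by rw [dstar_append, hx₁, hx₂], ?_, ?_⟩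
    · intro x' hx'
      by_cases hlen : x'.length ≤ x₁.length
      · exact hpre₁ x' (List.prefix_of_prefix_length_le hx' (x₁.prefix_append x₂) hlen)
      · have h₁x' : x₁ <+: x' :=
          List.prefix_of_prefix_length_le (x₁.prefix_append x₂) hx' (le_of_not_ge hlen)
        obtain ⟨t, rfl⟩ := h₁x'
        rw [dstar_append, hx₁]
        exact hpre₂ t ((List.prefix_append_right_inj x₁).mp hx')
    · intro d hd
      rcases List.mem_cons.mp hd with rfl | hd
      · exact ⟨x₁, x₁.prefix_append x₂, hx₁⟩
      · obtain ⟨x', hx', hdx⟩ := hvis d hd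
        exact ⟨x₁ ++ x', (List.prefix_append_right_inj x₁).mpr hx',
          by rw [dstar_append, hx₁, hdx]⟩

lemma exists_upWord [Finite Q] (δ : Q → A → Q) (qι : Q) (C : Set Q)
    (hC : IsSCC δ C) (hreach : ∀ p ∈ C, Reachable δ qι p) :
    ∃ (u v : List A) (hv : v ≠ []), infOcc δ qι (upWord u v hv) = C := by
  obtain ⟨p₀, hp₀⟩ := hC.1
  obtain ⟨u, hu⟩ := hreach p₀ hp₀
  have hfin : C.Finite := Set.toFinite C
  obtain ⟨v, hvne, hvloop, hvpre, hvis⟩ :=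
    loop_word hC hp₀ hfin.toFinset.toList
      (fun c hc => hfin.mem_toFinset.mp (Finset.mem_toList.mp hc)) p₀ hp₀
  have hL : 0 < v.length := List.length_pos_iff.mpr hvne
  refine ⟨u, v, hvne, ?_⟩
  have hbase : run δ qι (upWord u v hvne) u.length = p₀ := by
    rw [run_eq_dstar]
    have huq : (List.ofFn fun i : Fin u.length => upWord u v hvne i) = u := by
      refine List.ext_getElem (by simp) fun i h1 h2 => ?_
      simp [upWord, h2]
    rw [huq, hu]
  have hstep : ∀ m, run δ qι (upWord u v hvne) (u.length + m)
      = dstar δ p₀ (v.take (m % v.length)) := by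
    intro m
    induction m with
    | zero => simpa [dstar] using hbase
    | succ m ih =>
      rw [show u.length + (m + 1) = (u.length + m) + 1 by omega, run, ih]
      have hw : upWord u v hvne (u.length + m) = v[m % v.length]'(Nat.mod_lt _ hL) := by
        simp [upWord]
      rw [hw]
      have h1 : v.take (m % v.length + 1)
          = v.take (m % v.length) ++ [v[m % v.length]'(Nat.mod_lt _ hL)] := by
        rw [List.take_succ, List.getElem?_eq_getElem (Nat.mod_lt _ hL)]
        rfl
      have h2 : δ (dstar δ p₀ (v.take (m % v.length))) (v[m % v.length]'(Nat.mod_lt _ hL))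
          = dstar δ p₀ (v.take (m % v.length + 1)) := by
        rw [h1, dstar_append]; rfl
      rw [h2]
      have hdm := Nat.div_add_mod m v.length
      have hmod : (m + 1) % v.length = (m % v.length + 1) % v.length := by
        conv_lhs => rw [show m + 1 = v.length * (m / v.length) + (m % v.length + 1) from by
          rw [← Nat.add_assoc, hdm]]
        rw [Nat.mul_add_mod]
      rcases Nat.lt_or_ge (m % v.length + 1) v.length with hlt | hge
      · rw [hmod, Nat.mod_eq_of_lt hlt]
      · have heq : m % v.length + 1 = v.length :=
          le_antisymm (Nat.succ_le_of_lt (Nat.mod_lt m hL)) hge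
        rw [heq, List.take_length, hvloop, hmod, heq, Nat.mod_self, List.take_zero]
        rfl
  refine Set.eq_of_subset_of_subset ?_ ?_
  · intro p hp
    obtain ⟨n, hn, hrn⟩ := frequently_atTop.mp hp u.length
    obtain ⟨m, rfl⟩ := Nat.exists_eq_add_of_le hn
    rw [hstep m] at hrn
    rw [← hrn]
    exact hvpre _ (List.take_prefix _ v)
  · intro c hc
    obtain ⟨x', hx', hdx⟩ :=
      hvis c (Finset.mem_toList.mpr (hfin.mem_toFinset.mpr hc))
    have hxlen : x'.length ≤ v.length := hx'.length_le
    have hkey : dstar δ p₀ (v.take (x'.length % v.length)) = c := by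
      rcases eq_or_lt_of_le hxlen with heq | hlt
      · have hx'v : x' = v := by
          rw [List.prefix_iff_eq_take.mp hx', heq, List.take_length]
        rw [heq, Nat.mod_self, List.take_zero]
        rw [← hdx, hx'v, hvloop]
        rfl
      · rw [Nat.mod_eq_of_lt hlt, ← List.prefix_iff_eq_take.mp hx', hdx]
    refine frequently_atTop.mpr fun N => ⟨u.length + (N * v.length + x'.length), ?_, ?_⟩
    · have : N ≤ N * v.length := Nat.le_mul_of_pos_right N hL
      omega
    · rw [hstep, Nat.mul_add_mod', hkey]

end Aux

/-- Inclusion of DRAs holds iff for every reachable SCC `C` of the product, if `π₁ C`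
satisfies `α₁` then `π₂ C` satisfies `α₂`; non-inclusion is witnessed by an ultimately
periodic word. -/
theorem stmt12 {A Q₁ Q₂ : Type*} [Fintype A] [Fintype Q₁] [Fintype Q₂]
    (δ₁ : Q₁ → A → Q₁) (q₁ : Q₁) (α₁ : Set (Set Q₁ × Set Q₁)) (hα₁ : α₁.Finite)
    (δ₂ : Q₂ → A → Q₂) (q₂ : Q₂) (α₂ : Set (Set Q₂ × Set Q₂)) (hα₂ : α₂.Finite) :
    ({w : ℕ → A | rabinSat α₁ (infOcc δ₁ q₁ w)} ⊆ {w | rabinSat α₂ (infOcc δ₂ q₂ w)} ↔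
      ∀ C : Set (Q₁ × Q₂), IsSCC (prodStep δ₁ δ₂) C →
        (∀ p ∈ C, Reachable (prodStep δ₁ δ₂) (q₁, q₂) p) →
        rabinSat α₁ (Prod.fst '' C) → rabinSat α₂ (Prod.snd '' C)) ∧
    (¬ ({w : ℕ → A | rabinSat α₁ (infOcc δ₁ q₁ w)} ⊆ {w | rabinSat α₂ (infOcc δ₂ q₂ w)}) →
      ∃ (u v : List A) (hv : v ≠ []),
        rabinSat α₁ (infOcc δ₁ q₁ (upWord u v hv)) ∧
        ¬ rabinSat α₂ (infOcc δ₂ q₂ (upWord u v hv))) := by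
  have hiff : ({w : ℕ → A | rabinSat α₁ (infOcc δ₁ q₁ w)} ⊆ {w | rabinSat α₂ (infOcc δ₂ q₂ w)} ↔
      ∀ C : Set (Q₁ × Q₂), IsSCC (prodStep δ₁ δ₂) C →
        (∀ p ∈ C, Reachable (prodStep δ₁ δ₂) (q₁, q₂) p) →
        rabinSat α₁ (Prod.fst '' C) → rabinSat α₂ (Prod.snd '' C)) := by
    constructor
    · intro hsub C hSCC hre hsat1
      obtain ⟨u, v, hv, hocc⟩ := exists_upWord (prodStep δ₁ δ₂) (q₁, q₂) C hSCC hre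
      have h1 : infOcc δ₁ q₁ (upWord u v hv) = Prod.fst '' C := by
        rw [← fst_image_infOcc δ₁ δ₂ q₁ q₂, hocc]
      have h2 : infOcc δ₂ q₂ (upWord u v hv) = Prod.snd '' C := by
        rw [← snd_image_infOcc δ₁ δ₂ q₁ q₂, hocc]
      have hmem : upWord u v hv ∈ {w : ℕ → A | rabinSat α₁ (infOcc δ₁ q₁ w)} := by
        rw [Set.mem_setOf_eq, h1]; exact hsat1
      have := hsub hmem
      rwa [Set.mem_setOf_eq, h2] at this
    · intro h w hw
      have hSCC := infOcc_isSCC (prodStep δ₁ δ₂) (q₁, q₂) w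
      have hre : ∀ p ∈ infOcc (prodStep δ₁ δ₂) (q₁, q₂) w,
          Reachable (prodStep δ₁ δ₂) (q₁, q₂) p := fun p hp => reachable_of_mem_infOcc hp
      have h2 := h _ hSCC hre
        (by rw [fst_image_infOcc δ₁ δ₂ q₁ q₂]; exact hw)
      rw [Set.mem_setOf_eq]
      rwa [snd_image_infOcc δ₁ δ₂ q₁ q₂] at h2
  refine ⟨hiff, fun hns => ?_⟩
  have h := mt hiff.mpr hns
  push_neg at h
  obtain ⟨C, hSCC, hre, hsat1, hnsat2⟩ := h
  obtain ⟨u, v, hv, hocc⟩ := exists_upWord (prodStep δ₁ δ₂) (q₁, q₂) C hSCC hre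
  have h1 : infOcc δ₁ q₁ (upWord u v hv) = Prod.fst '' C := by
    rw [← fst_image_infOcc δ₁ δ₂ q₁ q₂, hocc]
  have h2 : infOcc δ₂ q₂ (upWord u v hv) = Prod.snd '' C := by
    rw [← snd_image_infOcc δ₁ δ₂ q₁ q₂, hocc]
  exact ⟨u, v, hv, by rw [h1]; exact hsat1, by rw [h2]; exact hnsat2⟩
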